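/- arXiv:1009.3248 — 2 statements merged into one kernel-verified Lean document; each statement's English description precedes it below -/
import Mathlib

section
/- Suppose φ is an expansive homeomorphism with specification and V, W : M → ℝ are regular continuous potentials. Then the following are equivalent: (1) V and W are physically equivalent, i.e. lim_{n→∞} (1/n) sup_{x∈M} |S_n V(x) − S_n W(x)| = 0; (2) for all n ≥ 1 and all x ∈ M with φ^n(x) = x one has S_n V(x) = S_n W(x). -/
open Filter

section TopDyn

variable {M : Type*} [MetricSpace M]

/-- Birkhoff sum `S_n f := Σ_{j=0}^{n-1} f ∘ φ^j`. -/
def birkhoff (φ : M → M) (f : M → ℝ) (n : ℕ) (x : M) : ℝ :=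
  ∑ j ∈ Finset.range n, f (φ^[j] x)

/-- The Bowen ball `B_n(x,ε) := {y : max_{0≤j≤n-1} d(φ^j x, φ^j y) < ε}`. -/
def bowenBall (φ : M → M) (n : ℕ) (x : M) (ε : ℝ) : Set M :=
  {y | ∀ j < n, dist (φ^[j] x) (φ^[j] y) < ε}

/-- The homeomorphism `φ` is expansive: `∃ r > 0` such that `d(φ^n x, φ^n y) ≤ r` for all
`n ∈ ℤ` forces `x = y`. -/
def Expansive (φ : M ≃ₜ M) : Prop :=
  ∃ r > (0 : ℝ), ∀ x y : M,
    (∀ n : ℤ, dist ((φ.toEquiv ^ n) x) ((φ.toEquiv ^ n) y) ≤ r) → x = y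

/-- The specification property: for every `δ > 0` there is `p(δ) > 0` such that any finite
family of orbit segments over integer intervals `[lo i, hi i] ⊆ [a,b]` that are mutually
`> p(δ)` apart can be `δ`-shadowed by a single periodic orbit of period `b - a + p(δ)`. -/
def Specification (φ : M ≃ₜ M) : Prop :=
  ∀ δ : ℝ, 0 < δ → ∃ p : ℕ, 0 < p ∧
    ∀ (a b : ℤ), a < b → ∀ (m : ℕ) (lo hi : Fin m → ℤ) (xs : Fin m → M),
      (∀ i, a ≤ lo i ∧ lo i ≤ hi i ∧ hi i ≤ b) →
      (∀ i j, i ≠ j → ∀ k ∈ Finset.Icc (lo i) (hi i), ∀ l ∈ Finset.Icc (lo j) (hi j),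
        (p : ℤ) < |k - l|) →
      ∃ x : M, (φ.toEquiv ^ (b - a + (p : ℤ))) x = x ∧
        ∀ i, ∀ k ∈ Finset.Icc (lo i) (hi i),
          dist ((φ.toEquiv ^ k) x) ((φ.toEquiv ^ k) (xs i)) < δ

/-- A continuous potential `V` is regular: for every sufficiently small `ε > 0` there is
`C_ε > 0` with `|S_n V(x) - S_n V(y)| < C_ε` whenever `y ∈ B_n(x,ε)`. -/
def RegularPotential (φ : M ≃ₜ M) (V : M → ℝ) : Prop :=
  ∃ ε₀ > (0 : ℝ), ∀ ε : ℝ, 0 < ε → ε < ε₀ → ∃ C : ℝ, 0 < C ∧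
    ∀ n : ℕ, 1 ≤ n → ∀ x y : M, y ∈ bowenBall (⇑φ) n x ε →
      |birkhoff (⇑φ) V n x - birkhoff (⇑φ) V n y| < C

/-- `V` and `W` are physically equivalent: `(1/n) sup_x |S_n V(x) - S_n W(x)| → 0`. -/
def PhysEquiv (φ : M ≃ₜ M) (V W : M → ℝ) : Prop :=
  Tendsto (fun n : ℕ => (n : ℝ)⁻¹ * ⨆ x : M, |birkhoff (⇑φ) V n x - birkhoff (⇑φ) W n x|)
    atTop (nhds 0)

end TopDyn

section Aux

variable {M : Type*} [MetricSpace M]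

lemma birkhoff_add' (φ : M → M) (f : M → ℝ) (m n : ℕ) (x : M) :
    birkhoff φ f (m + n) x = birkhoff φ f m x + birkhoff φ f n (φ^[m] x) :=
  birkhoffSum_add φ f m n x

lemma birkhoff_mul_of_periodic (φ : M → M) (f : M → ℝ) (n : ℕ) (x : M)
    (hx : φ^[n] x = x) (k : ℕ) :
    birkhoff φ f (k * n) x = k * birkhoff φ f n x := by
  induction k with
  | zero => simp [birkhoff]
  | succ k ih =>
    have hkn : φ^[k * n] x = x := by
      have : Function.IsPeriodicPt φ (n * k) x :=
        (show Function.IsPeriodicPt φ n x from hx).mul_const k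
      rw [mul_comm]; exact this
    rw [Nat.succ_mul, birkhoff_add', hkn, ih]
    push_cast; ring

lemma zpow_apply_eq_iterate (φ : M ≃ₜ M) (j : ℕ) (y : M) :
    (φ.toEquiv ^ (j : ℤ)) y = (⇑φ)^[j] y := by
  rw [zpow_natCast, ← Equiv.Perm.iterate_eq_pow]
  simp

lemma birkhoff_continuous (φ : M ≃ₜ M) (f : M → ℝ) (hf : Continuous f) (n : ℕ) :
    Continuous fun y : M => birkhoff (⇑φ) f n y := by
  apply continuous_finset_sum
  intro j _
  exact hf.comp (φ.continuous.iterate j)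

end Aux

/-- For an expansive homeomorphism with specification and regular potentials `V, W`,
physical equivalence of `V` and `W` is equivalent to the equality of the Birkhoff sums
`S_n V = S_n W` on all periodic points of period `n`. -/
theorem phys_equiv_iff_equal_on_periodic_orbits
    {M : Type*} [MetricSpace M] [CompactSpace M]
    (φ : M ≃ₜ M) (hexp : Expansive φ) (hspec : Specification φ)
    (V W : M → ℝ) (hVc : Continuous V) (hWc : Continuous W)
    (hVreg : RegularPotential φ V) (hWreg : RegularPotential φ W) :
    PhysEquiv φ V W ↔
      ∀ n : ℕ, 1 ≤ n → ∀ x : M, (⇑φ)^[n] x = x →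
        birkhoff (⇑φ) V n x = birkhoff (⇑φ) W n x := by
  rcases isEmpty_or_nonempty M with hM | hM
  · constructor
    · intro _ n _ x _; exact (hM.false x).elim
    · intro _
      unfold PhysEquiv
      simp only [Real.iSup_of_isEmpty, mul_zero]
      exact tendsto_const_nhds
  have hbdd : ∀ m : ℕ, BddAbove (Set.range fun y : M =>
      |birkhoff (⇑φ) V m y - birkhoff (⇑φ) W m y|) := fun m =>
    (isCompact_range ((birkhoff_continuous φ V hVc m).sub
        (birkhoff_continuous φ W hWc m)).abs).bddAbove
  constructor
  · -- PhysEquiv → equal on periodic points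
    intro hpe n hn x hx
    set c := |birkhoff (⇑φ) V n x - birkhoff (⇑φ) W n x| with hc
    have hb : ∀ k : ℕ, 1 ≤ k →
        c ≤ (n : ℝ) * ((↑(k * n) : ℝ)⁻¹ *
          ⨆ y : M, |birkhoff (⇑φ) V (k * n) y - birkhoff (⇑φ) W (k * n) y|) := by
      intro k hk
      have hkn0 : (0 : ℝ) < ((k * n : ℕ) : ℝ) := by
        have : 1 ≤ k * n := Nat.one_le_iff_ne_zero.mpr (by positivity)
        exact_mod_cast Nat.lt_of_lt_of_le Nat.zero_lt_one this
      have hkc : (k : ℝ) * c ≤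
          ⨆ y : M, |birkhoff (⇑φ) V (k * n) y - birkhoff (⇑φ) W (k * n) y| := by
        have h1 : |birkhoff (⇑φ) V (k * n) x - birkhoff (⇑φ) W (k * n) x| = (k : ℝ) * c := by
          rw [birkhoff_mul_of_periodic _ V n x hx k, birkhoff_mul_of_periodic _ W n x hx k,
            hc, ← mul_sub, abs_mul, Nat.abs_cast]
        calc (k : ℝ) * c = _ := h1.symm
          _ ≤ _ := le_ciSup (hbdd (k * n)) x
      have hk0 : (0 : ℝ) < (k : ℝ) := by exact_mod_cast hk
      rw [← mul_assoc]
      have hnk : (n : ℝ) * ((k * n : ℕ) : ℝ)⁻¹ = (k : ℝ)⁻¹ := by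
        push_cast
        field_simp
      rw [hnk, ← div_eq_inv_mul, le_div_iff₀ hk0, mul_comm]
      exact hkc
    have hlim : Tendsto (fun k : ℕ => (n : ℝ) * ((↑(k * n) : ℝ)⁻¹ *
        ⨆ y : M, |birkhoff (⇑φ) V (k * n) y - birkhoff (⇑φ) W (k * n) y|))
        atTop (nhds 0) := by
      have hmul : Tendsto (fun k : ℕ => k * n) atTop atTop :=
        Tendsto.atTop_mul_const' (Nat.lt_of_lt_of_le Nat.zero_lt_one hn) tendsto_id
      have := (hpe.comp hmul).const_mul (n : ℝ)
      simpa using this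
    have hc0 : c ≤ 0 := ge_of_tendsto hlim (eventually_atTop.mpr ⟨1, hb⟩)
    have : c = 0 := le_antisymm hc0 (abs_nonneg _)
    have := abs_eq_zero.mp this
    linarith [sub_eq_zero.mp this]
  · -- equal on periodic points → PhysEquiv
    intro hper
    obtain ⟨εV, hεV, hVr⟩ := hVreg
    obtain ⟨εW, hεW, hWr⟩ := hWreg
    set ε := min εV εW / 2 with hεdef
    have hε : 0 < ε := by positivity
    have hmin : 0 < min εV εW := lt_min hεV hεW
    have hεhalf : ε < min εV εW := by rw [hεdef]; linarith
    have hεltV : ε < εV := lt_of_lt_of_le hεhalf (min_le_left _ _)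
    have hεltW : ε < εW := lt_of_lt_of_le hεhalf (min_le_right _ _)
    obtain ⟨CV, hCV0, hCV⟩ := hVr ε hε hεltV
    obtain ⟨CW, hCW0, hCW⟩ := hWr ε hε hεltW
    obtain ⟨p, hp, hs⟩ := hspec ε hε
    -- uniform bound on |V - W|
    obtain ⟨K, hK⟩ : ∃ K : ℝ, ∀ y : M, |V y - W y| ≤ K := by
      obtain ⟨K, hK⟩ := (isCompact_range (hVc.sub hWc).abs).bddAbove
      exact ⟨K, fun y => hK (Set.mem_range_self y)⟩
    set B := CV + CW + p * K with hB
    have key : ∀ n : ℕ, 1 ≤ n → ∀ x : M,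
        |birkhoff (⇑φ) V n x - birkhoff (⇑φ) W n x| ≤ B := by
      intro n hn x
      have hab : (0 : ℤ) < (n : ℤ) := by exact_mod_cast hn
      obtain ⟨z, hzper, hzsh⟩ := hs 0 n hab 1 (fun _ => 0) (fun _ => (n : ℤ) - 1)
          (fun _ => x)
          (fun i => ⟨le_refl 0, by show (0:ℤ) ≤ (n:ℤ) - 1; omega, by show (n:ℤ) - 1 ≤ (n:ℤ); omega⟩)
          (fun i j hij => absurd (Subsingleton.elim i j) hij)
      -- z is periodic of period n + p
      have hzper' : (⇑φ)^[n + p] z = z := by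
        have h1 : ((n : ℤ) - 0 + (p : ℤ)) = ((n + p : ℕ) : ℤ) := by push_cast; ring
        rw [h1, zpow_apply_eq_iterate] at hzper
        exact hzper
      -- z shadows the orbit segment of x: z ∈ B_n(x, ε)
      have hball : z ∈ bowenBall (⇑φ) n x ε := by
        intro j hj
        have hmem : (j : ℤ) ∈ Finset.Icc (0 : ℤ) ((n : ℤ) - 1) := by
          simp only [Finset.mem_Icc]; omega
        have := hzsh 0 (j : ℤ) hmem
        rw [zpow_apply_eq_iterate, zpow_apply_eq_iterate] at this
        rw [dist_comm] at this
        exact this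
      have hVd : |birkhoff (⇑φ) V n x - birkhoff (⇑φ) V n z| < CV := hCV n hn x z hball
      have hWd : |birkhoff (⇑φ) W n x - birkhoff (⇑φ) W n z| < CW := hCW n hn x z hball
      -- on the periodic point the Birkhoff sums of period n+p agree
      have hnp : birkhoff (⇑φ) V (n + p) z = birkhoff (⇑φ) W (n + p) z :=
        hper (n + p) (le_trans hn (Nat.le_add_right n p)) z hzper'
      rw [birkhoff_add', birkhoff_add'] at hnp
      have htail : |birkhoff (⇑φ) V n z - birkhoff (⇑φ) W n z| ≤ p * K := by
        have h2 : birkhoff (⇑φ) V n z - birkhoff (⇑φ) W n z =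
            birkhoff (⇑φ) W p ((⇑φ)^[n] z) - birkhoff (⇑φ) V p ((⇑φ)^[n] z) := by
          linarith
        rw [h2]
        have h3 : birkhoff (⇑φ) W p ((⇑φ)^[n] z) - birkhoff (⇑φ) V p ((⇑φ)^[n] z) =
            ∑ j ∈ Finset.range p, (W ((⇑φ)^[j] ((⇑φ)^[n] z)) - V ((⇑φ)^[j] ((⇑φ)^[n] z))) := by
          rw [Finset.sum_sub_distrib]; rfl
        rw [h3]
        calc |∑ j ∈ Finset.range p, (W ((⇑φ)^[j] ((⇑φ)^[n] z)) - V ((⇑φ)^[j] ((⇑φ)^[n] z)))|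
            ≤ ∑ j ∈ Finset.range p, |W ((⇑φ)^[j] ((⇑φ)^[n] z)) - V ((⇑φ)^[j] ((⇑φ)^[n] z))| :=
              Finset.abs_sum_le_sum_abs _ _
          _ ≤ ∑ _j ∈ Finset.range p, K := by
              apply Finset.sum_le_sum
              intro j _
              rw [abs_sub_comm]
              exact hK _
          _ = p * K := by simp [mul_comm]
      calc |birkhoff (⇑φ) V n x - birkhoff (⇑φ) W n x|
          ≤ |birkhoff (⇑φ) V n x - birkhoff (⇑φ) V n z| +
            |birkhoff (⇑φ) V n z - birkhoff (⇑φ) W n z| +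
            |birkhoff (⇑φ) W n z - birkhoff (⇑φ) W n x| := by
            have := abs_sub_le (birkhoff (⇑φ) V n x) (birkhoff (⇑φ) V n z)
              (birkhoff (⇑φ) W n x)
            have := abs_sub_le (birkhoff (⇑φ) V n z) (birkhoff (⇑φ) W n z)
              (birkhoff (⇑φ) W n x)
            linarith
        _ ≤ B := by
            rw [abs_sub_comm (birkhoff (⇑φ) W n z)] at *
            rw [hB]; linarith
    -- finish by squeezing
    unfold PhysEquiv
    apply squeeze_zero' (g := fun n : ℕ => (n : ℝ)⁻¹ * B)
    · filter_upwards with n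
      have : (0 : ℝ) ≤ ⨆ x : M, |birkhoff (⇑φ) V n x - birkhoff (⇑φ) W n x| :=
        Real.iSup_nonneg fun x => abs_nonneg _
      positivity
    · filter_upwards [eventually_ge_atTop 1] with n hn
      have hsup : (⨆ x : M, |birkhoff (⇑φ) V n x - birkhoff (⇑φ) W n x|) ≤ B :=
        ciSup_le fun x => key n hn x
      have hn0 : (0 : ℝ) ≤ ((n : ℕ) : ℝ)⁻¹ := by positivity
      exact mul_le_mul_of_nonneg_left hsup hn0
    · simpa using tendsto_inv_atTop_nhds_zero_nat.mul_const B
end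

section
/- Suppose φ has finite topological entropy (P(0) < ∞), let ϑ : M → M be a continuous involution (ϑ ∘ ϑ = id) with ϑ ∘ φ = φ^{−1} ∘ ϑ, let V : M → ℝ be continuous, and let ν be a non-atomic, φ-invariant (ν ∘ φ^{−1} = ν) Borel probability measure with ν ∈ S_V. Then ∫_M (V − V ∘ ϑ) dν ≥ 0. -/
open MeasureTheory Filter

section TopDyn

variable {M : Type*} [MetricSpace M]

/-- `E` is `(n,ε)`-separated: distinct points of `E` are not in each other's Bowen balls. -/
def IsSeparatedSet (φ : M → M) (n : ℕ) (ε : ℝ) (E : Finset M) : Prop :=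
  ∀ x ∈ E, ∀ y ∈ E, x ≠ y → y ∉ bowenBall φ n x ε

/-- The partition function `Z_n(W,ε) := sup {Σ_{x∈E} e^{S_n W(x)} : E (n,ε)-separated}`,
computed in `[0,∞]`. -/
noncomputable def Zpart (φ : M → M) (W : M → ℝ) (n : ℕ) (ε : ℝ) : ENNReal :=
  ⨆ (E : Finset M) (_ : IsSeparatedSet φ n ε E),
    ∑ x ∈ E, ENNReal.ofReal (Real.exp (birkhoff φ W n x))

/-- Extended-real logarithm on `[0,∞]`. -/
noncomputable def elog (x : ENNReal) : EReal :=
  if x = ⊤ then ⊤ else if x = 0 then ⊥ else ((Real.log x.toReal : ℝ) : EReal)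

/-- `limsup_n (1/n) log Z_n(W,ε)`; the topological pressure `P(W)` is its limit as `ε ↓ 0`. -/
noncomputable def pressureApprox (φ : M → M) (W : M → ℝ) (ε : ℝ) : EReal :=
  atTop.limsup fun n : ℕ => (((n : ℝ)⁻¹ : ℝ) : EReal) * elog (Zpart φ W n ε)

/-- The condition `ν ∈ S_V`: for all sufficiently small `ε > 0` there are constants
`C_n(ε) > 0` with `(1/n) log C_n(ε) → 0` such that
`C_n(ε)⁻¹ ≤ ν(B_n(x,ε)) e^{-S_n V(x)} ≤ C_n(ε)` for all `x` and `n ≥ 1`. -/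
def memSV [MeasurableSpace M] (φ : M → M) (V : M → ℝ) (ν : Measure M) : Prop :=
  ∃ ε₀ > (0 : ℝ), ∀ ε : ℝ, 0 < ε → ε < ε₀ →
    ∃ C : ℕ → ℝ, (∀ n, 0 < C n) ∧
      Tendsto (fun n : ℕ => Real.log (C n) / n) atTop (nhds 0) ∧
      ∀ n : ℕ, 1 ≤ n → ∀ x : M,
        (C n)⁻¹ ≤ (ν (bowenBall φ n x ε)).toReal * Real.exp (-(birkhoff φ V n x)) ∧
        (ν (bowenBall φ n x ε)).toReal * Real.exp (-(birkhoff φ V n x)) ≤ C n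

end TopDyn

section Aux

open MeasureTheory Filter

namespace EPAux

variable {M : Type*} [MetricSpace M]

lemma mem_bowenBall_self (φ : M → M) (n : ℕ) (x : M) {ε : ℝ} (hε : 0 < ε) :
    x ∈ bowenBall φ n x ε := fun j _ => by simpa using hε

lemma bowenBall_symm {φ : M → M} {n : ℕ} {x y : M} {ε : ℝ}
    (h : y ∈ bowenBall φ n x ε) : x ∈ bowenBall φ n y ε :=
  fun j hj => by rw [dist_comm]; exact h j hj

lemma isOpen_bowenBall (φ : M ≃ₜ M) (n : ℕ) (x : M) (ε : ℝ) :
    IsOpen (bowenBall (⇑φ) n x ε) := by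
  have h : bowenBall (⇑φ) n x ε
      = ⋂ j ∈ Finset.range n, {y | dist ((⇑φ)^[j] x) ((⇑φ)^[j] y) < ε} := by
    ext y; simp [bowenBall, Finset.mem_range]
  rw [h]
  exact isOpen_biInter_finset fun j _ =>
    isOpen_lt (continuous_const.dist (φ.continuous.iterate j)) continuous_const

omit [MetricSpace M] in
lemma iterate_cancel {f g : M → M} (hfg : ∀ x, f (g x) = x) :
    ∀ j k x, f^[j] (g^[j + k] x) = g^[k] x := by
  intro j
  induction j with
  | zero => intro k x; simp
  | succ j ih =>
    intro k x
    have h1 : g^[j + 1 + k] x = g (g^[j + k] x) := by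
      have : j + 1 + k = (j + k) + 1 := by omega
      rw [this, Function.iterate_succ_apply']
    rw [Function.iterate_succ_apply, h1, hfg, ih]

lemma conj_iterate (φ : M ≃ₜ M) (ϑ : M → M) (hϑφ : ∀ x, ϑ (φ x) = φ.symm (ϑ x)) :
    ∀ j x, ϑ ((⇑φ)^[j] x) = (⇑φ.symm)^[j] (ϑ x) := by
  intro j
  induction j with
  | zero => intro x; simp
  | succ j ih =>
    intro x
    rw [Function.iterate_succ_apply', hϑφ, ih, (Function.iterate_succ_apply' (⇑φ.symm) j (ϑ x)).symm]

lemma conj_iterate' (φ : M ≃ₜ M) (ϑ : M → M) (hϑinv : ∀ x, ϑ (ϑ x) = x)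
    (hϑφ : ∀ x, ϑ (φ x) = φ.symm (ϑ x)) :
    ∀ j x, (⇑φ)^[j] (ϑ x) = ϑ ((⇑φ.symm)^[j] x) := by
  intro j x
  have h := conj_iterate φ ϑ hϑφ j (ϑ x)
  rw [hϑinv] at h
  have := congrArg ϑ h
  rwa [hϑinv] at this

variable [CompactSpace M]

lemma card_bound (φ : M ≃ₜ M) (n : ℕ) {ε : ℝ} (hε : 0 < ε) :
    ∃ m : ℕ, ∀ E : Finset M, IsSeparatedSet (⇑φ) n ε E → E.card ≤ m := by
  classical
  obtain ⟨t, ht⟩ := isCompact_univ.elim_finite_subcover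
    (fun x : M => bowenBall (⇑φ) n x (ε / 2))
    (fun x => isOpen_bowenBall φ n x (ε / 2))
    (fun y _ => Set.mem_iUnion.2 ⟨y, mem_bowenBall_self _ _ _ (by linarith)⟩)
  refine ⟨t.card, fun E hE => ?_⟩
  have hc : ∀ e : M, ∃ c, e ∈ E → c ∈ t ∧ e ∈ bowenBall (⇑φ) n c (ε / 2) := by
    intro e
    by_cases he : e ∈ E
    · have := ht (Set.mem_univ e)
      simp only [Set.mem_iUnion] at this
      obtain ⟨c, hct, hc⟩ := this
      exact ⟨c, fun _ => ⟨hct, hc⟩⟩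
    · exact ⟨e, fun h => absurd h he⟩
  choose f hf using hc
  refine Finset.card_le_card_of_injOn f (fun e he => (hf e he).1) ?_
  intro a ha b hb hab
  by_contra hne
  have h1 := (hf a ha).2
  have h2 := (hf b hb).2
  rw [hab] at h1
  have : b ∈ bowenBall (⇑φ) n a ε := by
    intro j hj
    calc dist ((⇑φ)^[j] a) ((⇑φ)^[j] b)
        ≤ dist ((⇑φ)^[j] a) ((⇑φ)^[j] (f b)) + dist ((⇑φ)^[j] (f b)) ((⇑φ)^[j] b) := dist_triangle _ _ _
      _ < ε / 2 + ε / 2 := add_lt_add (by rw [dist_comm]; exact h1 j hj) (h2 j hj)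
      _ = ε := by ring
  exact hE a ha b hb hne this

lemma exists_maximal_separated (φ : M ≃ₜ M) (n : ℕ) {ε : ℝ} (hε : 0 < ε) (A : Set M) :
    ∃ E : Finset M, ↑E ⊆ A ∧ IsSeparatedSet (⇑φ) n ε E ∧
      A ⊆ ⋃ x ∈ E, bowenBall (⇑φ) n x ε := by
  classical
  obtain ⟨m, hm⟩ := card_bound φ n hε
  set S : Set ℕ := {k | ∃ E : Finset M, ↑E ⊆ A ∧ IsSeparatedSet (⇑φ) n ε E ∧ E.card = k} with hS
  have h0 : (0 : ℕ) ∈ S := ⟨∅, by simp, fun x hx => by simp at hx, rfl⟩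
  have hbdd : BddAbove S := by
    refine ⟨m, fun k hk => ?_⟩
    obtain ⟨E, _, hsep, hcard⟩ := hk
    exact hcard ▸ hm E hsep
  obtain ⟨E, hEA, hsep, hcard⟩ := Nat.sSup_mem ⟨0, h0⟩ hbdd
  refine ⟨E, hEA, hsep, fun y hy => ?_⟩
  by_contra hy'
  have hnot : ∀ x ∈ E, y ∉ bowenBall (⇑φ) n x ε := by
    intro x hx hmem
    exact hy' (Set.mem_biUnion hx hmem)
  have hyE : y ∉ E := fun h => hnot y h (mem_bowenBall_self _ _ _ hε)
  have hsep' : IsSeparatedSet (⇑φ) n ε (insert y E) := by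
    intro a ha b hb hab
    rcases Finset.mem_insert.1 ha with ha1 | ha2
    · rcases Finset.mem_insert.1 hb with hb1 | hb2
      · exact absurd (ha1.trans hb1.symm) hab
      · subst ha1; intro hmem; exact hnot b hb2 (bowenBall_symm hmem)
    · rcases Finset.mem_insert.1 hb with hb1 | hb2
      · subst hb1; exact hnot a ha2
      · exact hsep a ha2 b hb2 hab
  have hmemS : E.card + 1 ∈ S := by
    refine ⟨insert y E, ?_, hsep', Finset.card_insert_of_notMem hyE⟩
    intro z hz
    rcases Finset.mem_coe.1 hz |> Finset.mem_insert.1 with rfl | hz'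
    · exact hy
    · exact hEA hz'
  have := le_csSup hbdd hmemS
  omega

end EPAux

end Aux

namespace EPAux

section Meas

open MeasureTheory

variable {M : Type*} [MetricSpace M] [MeasurableSpace M] [BorelSpace M]
  (φ : M ≃ₜ M) (ν : Measure M)

lemma map_iterate (hinv : ν.map ⇑φ = ν) (j : ℕ) : ν.map ((⇑φ)^[j]) = ν := by
  induction j with
  | zero => simpa using Measure.map_id
  | succ j ih =>
    rw [Function.iterate_succ,
      ← Measure.map_map ((φ.continuous.iterate j).measurable) φ.continuous.measurable,
      hinv, ih]

lemma map_symm (hinv : ν.map ⇑φ = ν) : ν.map ⇑φ.symm = ν := by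
  conv_lhs => rw [← hinv]
  rw [Measure.map_map φ.symm.continuous.measurable φ.continuous.measurable]
  have h : ⇑φ.symm ∘ ⇑φ = id := by funext x; simp
  rw [h, Measure.map_id]

lemma meas_image_iterate (hinv : ν.map ⇑φ = ν) (k : ℕ) (S : Set M)
    (hS : MeasurableSet S) : ν ((⇑φ)^[k] '' S) = ν S := by
  have himg : (⇑φ)^[k] '' S = ((⇑φ.symm)^[k]) ⁻¹' S := by
    ext u
    constructor
    · rintro ⟨w, hw, rfl⟩
      have h1 : (⇑φ.symm)^[k] ((⇑φ)^[k] w) = w := by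
        have := iterate_cancel (f := ⇑φ.symm) (g := ⇑φ)
          (fun x => φ.symm_apply_apply x) k 0 w
        simpa using this
      simpa [Set.mem_preimage, h1]
    · intro hu
      refine ⟨(⇑φ.symm)^[k] u, hu, ?_⟩
      have := iterate_cancel (f := ⇑φ) (g := ⇑φ.symm)
        (fun x => φ.apply_symm_apply x) k 0 u
      simpa using this
  rw [himg, ← Measure.map_apply ((φ.symm.continuous.iterate k).measurable) hS,
    map_iterate φ.symm ν (map_symm φ ν hinv) k]

end Meas

end EPAux

/-- If `φ` has finite topological entropy, `ϑ` is a continuous time reversal, and `ν` is a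
non-atomic `φ`-invariant probability measure with `ν ∈ S_V`, then
`∫ (V - V∘ϑ) dν ≥ 0`. -/
theorem entropy_production_nonneg_SV
    {M : Type*} [MetricSpace M] [CompactSpace M] [MeasurableSpace M] [BorelSpace M]
    (φ : M ≃ₜ M)
    (hfin : ∃ P : ℝ, Tendsto (fun ε : ℝ => pressureApprox (⇑φ) (fun _ => (0 : ℝ)) ε)
      (nhdsWithin 0 (Set.Ioi 0)) (nhds (P : EReal)))
    (ϑ : M → M) (hϑc : Continuous ϑ) (hϑinv : ∀ x, ϑ (ϑ x) = x)
    (hϑφ : ∀ x, ϑ (φ x) = φ.symm (ϑ x))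
    (V : M → ℝ) (hVc : Continuous V)
    (ν : Measure M) [IsProbabilityMeasure ν]
    (hatom : ∀ x : M, ν {x} = 0)
    (hinv : ν.map (⇑φ) = ν)
    (hSV : memSV (⇑φ) V ν) :
    0 ≤ ∫ x, (V x - V (ϑ x)) ∂ν := by
  classical
  set g : M → ℝ := fun x => V (ϑ x) - V x with hgdef
  have hgc : Continuous g := (hVc.comp hϑc).sub hVc
  have hint : ∀ f : M → ℝ, Continuous f → Integrable f ν := fun f hf =>
    hf.integrable_of_hasCompactSupport (HasCompactSupport.of_compactSpace f)
  have hϑm : Measurable ϑ := hϑc.measurable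
  have hbirk_cont : ∀ f : M → ℝ, Continuous f → ∀ n, Continuous (birkhoff (⇑φ) f n) := by
    intro f hf n
    exact continuous_finset_sum _ fun j _ => hf.comp (φ.continuous.iterate j)
  have htR : ∀ S : Set M, (ν S).toReal ≤ 1 := by
    intro S
    have h := ENNReal.toReal_mono (measure_ne_top ν Set.univ)
      (measure_mono (Set.subset_univ S))
    simpa [measure_univ] using h
  have key : ∫ x, g x ∂ν ≤ 0 := by
    by_contra hcon
    push_neg at hcon
    set c : ℝ := ∫ x, g x ∂ν with hcdef
    -- bound on g
    obtain ⟨B0, hB0⟩ := IsCompact.exists_bound_of_continuousOn isCompact_univ hgc.continuousOn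
    set B : ℝ := |B0| + 1 with hBdef
    have hBpos : (0 : ℝ) < B := by positivity
    have hB1 : ∀ x : M, |g x| ≤ B := by
      intro x
      have h1 := hB0 x (Set.mem_univ x)
      rw [Real.norm_eq_abs] at h1
      have h2 := le_abs_self B0
      simp only [hBdef]
      linarith
    set p : ℝ := c / (2 * B) with hpdef
    have hppos : 0 < p := div_pos hcon (by positivity)
    -- Gibbs data
    obtain ⟨ε₀, hε₀, hSV'⟩ := hSV
    set ε : ℝ := ε₀ / 2 with hεdef
    have hεpos : 0 < ε := by simp only [hεdef]; linarith
    obtain ⟨C, hCpos, hClim, hCbd⟩ := hSV' ε hεpos (by simp only [hεdef]; linarith)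
    have hUC := CompactSpace.uniformContinuous_of_continuous hϑc
    obtain ⟨δ, hδpos, hδ⟩ := Metric.uniformContinuous_iff.1 hUC (ε / 2) (by linarith)
    set η : ℝ := min δ (ε₀ / 2) with hηdef
    have hηpos : 0 < η := lt_min hδpos (by linarith)
    have hηδ : η ≤ δ := min_le_left _ _
    have hηε₀ : η < ε₀ := lt_of_le_of_lt (min_le_right _ _) (by linarith)
    obtain ⟨C', hC'pos, hC'lim, hC'bd⟩ := hSV' η hηpos hηε₀
    -- choose n with C n * C' n * exp(-(n c /2)) < p and 1 ≤ n
    have hq : Tendsto (fun n : ℕ => C n * C' n * Real.exp (-((n : ℝ) * c / 2)))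
        atTop (nhds 0) := by
      have h1 : Tendsto (fun n : ℕ =>
          Real.log (C n) / n + Real.log (C' n) / n - c / 2) atTop (nhds (0 + 0 - c / 2)) :=
        (hClim.add hC'lim).sub tendsto_const_nhds
      have h2 : Tendsto (fun n : ℕ => (n : ℝ)) atTop atTop := tendsto_natCast_atTop_atTop
      have h3 : Tendsto (fun n : ℕ =>
          (n : ℝ) * (Real.log (C n) / n + Real.log (C' n) / n - c / 2)) atTop atBot := by
        have hneg : (0 : ℝ) + 0 - c / 2 < 0 := by linarith
        exact Filter.Tendsto.atTop_mul_neg hneg h2 h1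
      have h4 := Real.tendsto_exp_atBot.comp h3
      refine h4.congr' ?_
      filter_upwards [eventually_ge_atTop 1] with n hn
      have hn0 : (n : ℝ) ≠ 0 := by
        have : (0 : ℝ) < n := by exact_mod_cast hn
        linarith
      show Real.exp ((n : ℝ) * (Real.log (C n) / n + Real.log (C' n) / n - c / 2))
          = C n * C' n * Real.exp (-((n : ℝ) * c / 2))
      have harg : (n : ℝ) * (Real.log (C n) / n + Real.log (C' n) / n - c / 2)
          = Real.log (C n) + Real.log (C' n) + (-((n : ℝ) * c / 2)) := by
        field_simp
        ring
      rw [harg, Real.exp_add, Real.exp_add, Real.exp_log (hCpos n), Real.exp_log (hC'pos n)]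
    have hev : ∀ᶠ n : ℕ in atTop,
        C n * C' n * Real.exp (-((n : ℝ) * c / 2)) < p := hq.eventually_lt_const hppos
    obtain ⟨n, hqlt, hn1⟩ := (hev.and (eventually_ge_atTop 1)).exists
    have hnpos : (0 : ℝ) < n := by exact_mod_cast hn1
    -- the set A of good points
    set A : Set M := {x | (n : ℝ) * c / 2 ≤ birkhoff (⇑φ) g n x} with hAdef
    have hA_meas : MeasurableSet A :=
      (isClosed_le continuous_const (hbirk_cont g hgc n)).measurableSet
    -- integral of the Birkhoff sum
    have hSg_int : ∫ x, birkhoff (⇑φ) g n x ∂ν = n * c := by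
      have hii : ∀ j : ℕ, Integrable (fun x => g ((⇑φ)^[j] x)) ν := fun j =>
        hint _ (hgc.comp (φ.continuous.iterate j))
      have h1 : ∫ x, birkhoff (⇑φ) g n x ∂ν
          = ∑ j ∈ Finset.range n, ∫ x, g ((⇑φ)^[j] x) ∂ν := by
        simp only [birkhoff]
        exact integral_finset_sum _ fun j _ => hii j
      have h2 : ∀ j : ℕ, ∫ x, g ((⇑φ)^[j] x) ∂ν = c := by
        intro j
        have hmap := EPAux.map_iterate φ ν hinv j
        conv_rhs => rw [hcdef, ← hmap]
        rw [integral_map ((φ.continuous.iterate j).measurable).aemeasurable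
          hgc.aestronglyMeasurable]
      rw [h1, Finset.sum_congr rfl fun j _ => h2 j, Finset.sum_const, Finset.card_range,
        nsmul_eq_mul]
    -- lower bound on ν A
    have hνA : p ≤ (ν A).toReal := by
      have hi := hint _ (hbirk_cont g hgc n)
      have hsplit : ∫ x in A, birkhoff (⇑φ) g n x ∂ν
          + ∫ x in Aᶜ, birkhoff (⇑φ) g n x ∂ν = (n : ℝ) * c := by
        rw [integral_add_compl hA_meas hi, hSg_int]
      have hpt : ∀ x : M, birkhoff (⇑φ) g n x ≤ (n : ℝ) * B := by
        intro x
        have h1 : birkhoff (⇑φ) g n x ≤ ∑ _j ∈ Finset.range n, B :=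
          Finset.sum_le_sum fun j _ => (abs_le.1 (hB1 _)).2
        simpa [Finset.sum_const, Finset.card_range, nsmul_eq_mul] using h1
      have h_upA : ∫ x in A, birkhoff (⇑φ) g n x ∂ν ≤ (n : ℝ) * B * (ν A).toReal := by
        have h1 : ∫ x in A, birkhoff (⇑φ) g n x ∂ν ≤ ∫ _x in A, (n : ℝ) * B ∂ν :=
          setIntegral_mono_on hi.integrableOn
            (integrableOn_const (measure_ne_top ν A)) hA_meas fun x _ => hpt x
        rw [setIntegral_const] at h1
        rw [mul_comm ((n : ℝ) * B) ((ν A).toReal)]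
        simp only [smul_eq_mul] at h1; exact h1
      have h_upAc : ∫ x in Aᶜ, birkhoff (⇑φ) g n x ∂ν ≤ (n : ℝ) * c / 2 := by
        have h1 : ∫ x in Aᶜ, birkhoff (⇑φ) g n x ∂ν ≤ ∫ _x in Aᶜ, ((n : ℝ) * c / 2) ∂ν := by
          refine setIntegral_mono_on hi.integrableOn
            (integrableOn_const (measure_ne_top ν Aᶜ)) hA_meas.compl ?_
          intro x hx
          have : ¬ ((n : ℝ) * c / 2 ≤ birkhoff (⇑φ) g n x) := hx
          linarith [not_le.1 this]
        rw [setIntegral_const, smul_eq_mul] at h1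
        have h2 : (ν Aᶜ).toReal * ((n : ℝ) * c / 2) ≤ 1 * ((n : ℝ) * c / 2) := by
          apply mul_le_mul_of_nonneg_right (htR Aᶜ)
          positivity
        change _ ≤ (ν Aᶜ).toReal * _ at h1
        linarith
      have h3 : (n : ℝ) * c / 2 ≤ (n : ℝ) * B * (ν A).toReal := by
        have e4 := add_le_add h_upA h_upAc
        rw [hsplit] at e4
        linarith
      rw [hpdef, div_le_iff₀ (by positivity)]
      nlinarith [h3, hnpos]
    -- maximal separated set
    obtain ⟨E, hEA, hsep, hcover⟩ := EPAux.exists_maximal_separated φ n hεpos A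
    set Dx : M → Set M := fun x => ϑ ⁻¹' (bowenBall (⇑φ) n x (ε / 2)) with hDxdef
    -- covering bound
    have hcoversum : (ν A).toReal ≤ ∑ x ∈ E, (ν (bowenBall (⇑φ) n x ε)).toReal := by
      have h1 : ν A ≤ ∑ x ∈ E, ν (bowenBall (⇑φ) n x ε) :=
        le_trans (measure_mono hcover) (measure_biUnion_finset_le E _)
      have hne : ∀ x ∈ E, ν (bowenBall (⇑φ) n x ε) ≠ ⊤ := fun x _ => measure_ne_top ν _
      have h2 := ENNReal.toReal_mono (ENNReal.sum_ne_top.2 hne) h1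
      rwa [ENNReal.toReal_sum hne] at h2
    -- Gibbs upper bound
    have hupper : ∀ x : M,
        (ν (bowenBall (⇑φ) n x ε)).toReal ≤ C n * Real.exp (birkhoff (⇑φ) V n x) := by
      intro x
      have h := (hCbd n hn1 x).2
      have h1 := mul_le_mul_of_nonneg_right h (Real.exp_pos (birkhoff (⇑φ) V n x)).le
      rwa [mul_assoc, ← Real.exp_add, neg_add_cancel, Real.exp_zero, mul_one] at h1
    -- reversal bound
    have hrev : ∀ x : M, Real.exp (birkhoff (⇑φ) (fun y => V (ϑ y)) n x)
        ≤ C' n * (ν (Dx x)).toReal := by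
      intro x
      set z : M := (⇑φ.symm)^[n - 1] (ϑ x) with hz
      have hφz : (⇑φ)^[n - 1] z = ϑ x := by
        rw [hz]
        have := EPAux.iterate_cancel (f := ⇑φ) (g := ⇑φ.symm)
          (fun y => φ.apply_symm_apply y) (n - 1) 0 (ϑ x)
        simpa using this
      have hbz : birkhoff (⇑φ) V n z = birkhoff (⇑φ) (fun y => V (ϑ y)) n x := by
        simp only [birkhoff]
        have hterm : ∀ j ∈ Finset.range n,
            V ((⇑φ)^[j] z) = V (ϑ ((⇑φ)^[n - 1 - j] x)) := by
          intro j hj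
          have hj' : j < n := Finset.mem_range.1 hj
          have h1 : (⇑φ)^[j] z = (⇑φ.symm)^[n - 1 - j] (ϑ x) := by
            rw [hz]
            have hit := EPAux.iterate_cancel (f := ⇑φ) (g := ⇑φ.symm)
              (fun y => φ.apply_symm_apply y) j (n - 1 - j) (ϑ x)
            rw [show j + (n - 1 - j) = n - 1 by omega] at hit
            exact hit
          rw [h1, ← EPAux.conj_iterate φ ϑ hϑφ (n - 1 - j) x]
        calc ∑ j ∈ Finset.range n, V ((⇑φ)^[j] z)
            = ∑ j ∈ Finset.range n, V (ϑ ((⇑φ)^[n - 1 - j] x)) :=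
              Finset.sum_congr rfl hterm
          _ = ∑ j ∈ Finset.range n, V (ϑ ((⇑φ)^[j] x)) :=
              Finset.sum_range_reflect (fun k => V (ϑ ((⇑φ)^[k] x))) n
      have hlow := (hC'bd n hn1 z).1
      have hexp : Real.exp (birkhoff (⇑φ) V n z)
          ≤ C' n * (ν (bowenBall (⇑φ) n z η)).toReal := by
        have h1 := mul_le_mul_of_nonneg_right hlow (Real.exp_pos (birkhoff (⇑φ) V n z)).le
        rw [mul_assoc, ← Real.exp_add, neg_add_cancel, Real.exp_zero, mul_one] at h1
        rwa [inv_mul_le_iff₀ (hC'pos n)] at h1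
      have hsub : (⇑φ)^[n - 1] '' (bowenBall (⇑φ) n z η) ⊆ Dx x := by
        rintro u ⟨w, hw, rfl⟩
        show ϑ ((⇑φ)^[n - 1] w) ∈ bowenBall (⇑φ) n x (ε / 2)
        intro j hj
        have e1 : (⇑φ)^[j] (ϑ ((⇑φ)^[n - 1] w)) = ϑ ((⇑φ)^[n - 1 - j] w) := by
          rw [EPAux.conj_iterate' φ ϑ hϑinv hϑφ j ((⇑φ)^[n - 1] w)]
          congr 1
          have hit := EPAux.iterate_cancel (f := ⇑φ.symm) (g := ⇑φ)
            (fun y => φ.symm_apply_apply y) j (n - 1 - j) w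
          rw [show j + (n - 1 - j) = n - 1 by omega] at hit
          exact hit
        have e2 : (⇑φ)^[j] x = ϑ ((⇑φ)^[n - 1 - j] z) := by
          have hx : x = ϑ ((⇑φ)^[n - 1] z) := by rw [hφz, hϑinv]
          conv_lhs => rw [hx]
          rw [EPAux.conj_iterate' φ ϑ hϑinv hϑφ j ((⇑φ)^[n - 1] z)]
          congr 1
          have hit := EPAux.iterate_cancel (f := ⇑φ.symm) (g := ⇑φ)
            (fun y => φ.symm_apply_apply y) j (n - 1 - j) z
          rw [show j + (n - 1 - j) = n - 1 by omega] at hit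
          exact hit
        rw [e1, e2]
        exact hδ (lt_of_lt_of_le (hw (n - 1 - j) (by omega)) hηδ)
      have hmeas1 : ν (bowenBall (⇑φ) n z η) ≤ ν (Dx x) := by
        rw [← EPAux.meas_image_iterate φ ν hinv (n - 1) _
          (EPAux.isOpen_bowenBall φ n z η).measurableSet]
        exact measure_mono hsub
      calc Real.exp (birkhoff (⇑φ) (fun y => V (ϑ y)) n x)
          = Real.exp (birkhoff (⇑φ) V n z) := by rw [hbz]
        _ ≤ C' n * (ν (bowenBall (⇑φ) n z η)).toReal := hexp
        _ ≤ C' n * (ν (Dx x)).toReal := by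
            apply mul_le_mul_of_nonneg_left _ (hC'pos n).le
            exact ENNReal.toReal_mono (measure_ne_top ν _) hmeas1
    -- disjointness
    have hdisj : (↑E : Set M).PairwiseDisjoint Dx := by
      intro a ha b hb hab
      refine Set.disjoint_left.2 fun u hua hub => ?_
      have hba : b ∈ bowenBall (⇑φ) n a ε := by
        intro j hj
        calc dist ((⇑φ)^[j] a) ((⇑φ)^[j] b)
            ≤ dist ((⇑φ)^[j] a) ((⇑φ)^[j] (ϑ u))
              + dist ((⇑φ)^[j] (ϑ u)) ((⇑φ)^[j] b) := dist_triangle _ _ _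
          _ < ε / 2 + ε / 2 := add_lt_add (hua j hj) (by rw [dist_comm]; exact hub j hj)
          _ = ε := by ring
      exact hsep a (Finset.mem_coe.1 ha) b (Finset.mem_coe.1 hb) hab hba
    have hsum1 : ∑ x ∈ E, (ν (Dx x)).toReal ≤ 1 := by
      have hDm : ∀ x ∈ E, MeasurableSet (Dx x) := fun x _ =>
        hϑm (EPAux.isOpen_bowenBall φ n x (ε / 2)).measurableSet
      have hEq := measure_biUnion_finset (μ := ν) hdisj hDm
      have hne : ∀ x ∈ E, ν (Dx x) ≠ ⊤ := fun x _ => measure_ne_top ν _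
      calc ∑ x ∈ E, (ν (Dx x)).toReal = (∑ x ∈ E, ν (Dx x)).toReal :=
            (ENNReal.toReal_sum hne).symm
        _ = (ν (⋃ x ∈ E, Dx x)).toReal := by rw [← hEq]
        _ ≤ 1 := htR _
    -- per-point exponent comparison
    have hx_in : ∀ x ∈ E, Real.exp (birkhoff (⇑φ) V n x)
        ≤ Real.exp (-((n : ℝ) * c / 2)) * Real.exp (birkhoff (⇑φ) (fun y => V (ϑ y)) n x) := by
      intro x hx
      have hxA : x ∈ A := hEA (Finset.mem_coe.2 hx)
      have h1 : (n : ℝ) * c / 2 ≤ birkhoff (⇑φ) g n x := hxA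
      have hsplit : birkhoff (⇑φ) g n x
          = birkhoff (⇑φ) (fun y => V (ϑ y)) n x - birkhoff (⇑φ) V n x := by
        simp only [birkhoff, hgdef]
        rw [← Finset.sum_sub_distrib]
      rw [← Real.exp_add]
      apply Real.exp_le_exp.2
      rw [hsplit] at h1
      linarith
    -- final chain
    have hfinal : p ≤ C n * C' n * Real.exp (-((n : ℝ) * c / 2)) := by
      calc p ≤ (ν A).toReal := hνA
        _ ≤ ∑ x ∈ E, (ν (bowenBall (⇑φ) n x ε)).toReal := hcoversum
        _ ≤ ∑ x ∈ E, C n * Real.exp (birkhoff (⇑φ) V n x) :=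
            Finset.sum_le_sum fun x _ => hupper x
        _ ≤ ∑ x ∈ E, C n * (Real.exp (-((n : ℝ) * c / 2))
              * Real.exp (birkhoff (⇑φ) (fun y => V (ϑ y)) n x)) :=
            Finset.sum_le_sum fun x hx =>
              mul_le_mul_of_nonneg_left (hx_in x hx) (hCpos n).le
        _ ≤ ∑ x ∈ E, C n * (Real.exp (-((n : ℝ) * c / 2)) * (C' n * (ν (Dx x)).toReal)) :=
            Finset.sum_le_sum fun x _ =>
              mul_le_mul_of_nonneg_left
                (mul_le_mul_of_nonneg_left (hrev x) (Real.exp_pos _).le) (hCpos n).le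
        _ = ∑ x ∈ E, (C n * C' n * Real.exp (-((n : ℝ) * c / 2))) * (ν (Dx x)).toReal :=
            Finset.sum_congr rfl fun x _ => by ring
        _ = (C n * C' n * Real.exp (-((n : ℝ) * c / 2))) * ∑ x ∈ E, (ν (Dx x)).toReal :=
            (Finset.mul_sum _ _ _).symm
        _ ≤ (C n * C' n * Real.exp (-((n : ℝ) * c / 2))) * 1 := by
            apply mul_le_mul_of_nonneg_left hsum1
            exact mul_nonneg (mul_nonneg (hCpos n).le (hC'pos n).le) (Real.exp_pos _).le
        _ = C n * C' n * Real.exp (-((n : ℝ) * c / 2)) := mul_one _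
    linarith
  have heq : ∫ x, (V x - V (ϑ x)) ∂ν = - ∫ x, g x ∂ν := by
    rw [← integral_neg]
    congr 1
    funext x
    simp only [hgdef]
    ring
  rw [heq]
  linarith
end
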